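/- arXiv:1308.2892 — 6 statements merged into one kernel-verified Lean document; each statement's English description precedes it below -/
import Mathlib

section
/- Let α be a type and let w, u be lists over α such that w has no duplicate elements (w.Nodup). If u is a sublist of w and u is also a sublist of the reverse of w, then u has length at most 1. -/
lemma pair_sublist_not_both {α : Type*} {a b : α} : ∀ (w : List α), w.Nodup →
    [a, b].Sublist w → [b, a].Sublist w → a = b := by
  intro w
  induction w with
  | nil => intro _ h1 _; exact absurd h1 (by simp)
  | cons x xs ih =>
    intro hw h1 h2
    simp only [List.nodup_cons] at hw
    rw [List.cons_sublist_cons'] at h1 h2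
    rcases h1 with h1 | ⟨rfl, h1⟩
    · rcases h2 with h2 | ⟨rfl, h2⟩
      · exact ih hw.2 h1 h2
      · exact absurd (h1.subset (by simp)) hw.1
    · rcases h2 with h2 | ⟨rfl, h2⟩
      · exact absurd (h2.subset (by simp)) hw.1
      · rfl

theorem sublist_of_self_and_reverse_length_le_one {α : Type*} (w u : List α)
    (hw : w.Nodup) (h1 : u.Sublist w) (h2 : u.Sublist w.reverse) :
    u.length ≤ 1 := by
  match u with
  | [] => simp
  | [a] => simp
  | a :: b :: t =>
    exfalso
    have hab : [a, b].Sublist (a :: b :: t) := by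
      exact (List.nil_sublist t).cons₂ b |>.cons₂ a
    have hba : [b, a].Sublist w := by
      have := (hab.trans h2).reverse
      simpa using this
    have hne : a ≠ b := by
      have := h1.nodup hw
      simp at this
      exact fun h => this.1.1 (h ▸ rfl) |>.elim
    exact hne (pair_sublist_not_both w hw (hab.trans h1) hba)
end

section
/- Let α be a type with decidable equality, and let w be a list over α with no duplicate elements (w.Nodup). Then for every list u over α, u is a sublist of w if and only if every element of u occurs in w and every two consecutive elements a, b of u satisfy that the index of the first occurrence of a in w is strictly less than the index of the first occurrence of b in w (i.e., u satisfies List.Chain' for the relation fun a b => w.indexOf a < w.indexOf b). -/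
private lemma nodup_pairwise_indexOf {α : Type*} [DecidableEq α]
    (w : List α) (hw : w.Nodup) :
    w.Pairwise (fun a b => w.idxOf a < w.idxOf b) := by
  rw [List.pairwise_iff_getElem]
  intro i j hi hj hij
  rwa [List.Nodup.idxOf_getElem hw i hi, List.Nodup.idxOf_getElem hw j hj]

private lemma aux_back {α : Type*} [DecidableEq α] :
    ∀ (w : List α), w.Nodup → ∀ u : List α,
      (∀ a ∈ u, a ∈ w) → u.Pairwise (fun a b => w.idxOf a < w.idxOf b) →
      u.Sublist w
  | [], _, u, hmem, _ => by
      cases u with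
      | nil => exact List.Sublist.refl _
      | cons a u => exact absurd (hmem a (by simp)) (by simp)
  | c :: w', hw, u, hmem, hpw => by
      have hw'nd : w'.Nodup := hw.of_cons
      have hcw : c ∉ w' := (List.nodup_cons.1 hw).1
      cases u with
      | nil => exact List.nil_sublist _
      | cons a u' =>
        have hidx : ∀ b, b ≠ c →
            (c :: w').idxOf b = w'.idxOf b + 1 := by
          intro b hbc
          simp [List.idxOf_cons, Ne.symm hbc]
        by_cases hac : a = c
        · subst hac
          have hu'mem : ∀ b ∈ u', b ∈ w' := by
            intro b hb
            have hlt := (List.pairwise_cons.1 hpw).1 b hb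
            have hbc : b ≠ a := by
              rintro rfl
              simp at hlt
            have := hmem b (List.mem_cons_of_mem _ hb)
            simpa [hbc] using this
          have hbne : ∀ b ∈ u', b ≠ a := by
            intro b hb hba
            exact hcw (hba ▸ hu'mem b hb)
          have hpw' : u'.Pairwise (fun x y => w'.idxOf x < w'.idxOf y) := by
            refine (List.pairwise_cons.1 hpw).2.imp_of_mem ?_
            intro x y hx hy h
            rwa [hidx x (hbne x hx), hidx y (hbne y hy), Nat.add_lt_add_iff_right] at h
          exact (aux_back w' hw'nd u' hu'mem hpw').cons₂ a
        · have hall : ∀ b ∈ a :: u', b ≠ c := by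
            intro b hb
            rcases List.mem_cons.1 hb with rfl | hb'
            · exact hac
            · intro hbc
              have hlt := (List.pairwise_cons.1 hpw).1 b hb'
              subst hbc
              simp [List.idxOf_cons] at hlt
          have hmem' : ∀ b ∈ a :: u', b ∈ w' := by
            intro b hb
            have := hmem b hb
            simpa [hall b hb] using this
          have hpw' : (a :: u').Pairwise (fun x y => w'.idxOf x < w'.idxOf y) := by
            refine hpw.imp_of_mem ?_
            intro x y hx hy h
            rwa [hidx x (hall x hx), hidx y (hall y hy), Nat.add_lt_add_iff_right] at h
          exact (aux_back w' hw'nd (a :: u') hmem' hpw').cons c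

theorem sublist_iff_mem_and_chain'_indexOf_lt {α : Type*} [DecidableEq α]
    (w : List α) (hw : w.Nodup) (u : List α) :
    u.Sublist w ↔
      (∀ a ∈ u, a ∈ w) ∧ u.Chain' (fun a b => w.idxOf a < w.idxOf b) := by
  haveI : IsTrans α (fun a b => w.idxOf a < w.idxOf b) := ⟨fun _ _ _ => Nat.lt_trans⟩
  rw [List.Chain', List.isChain_iff_pairwise]
  constructor
  · intro h
    exact ⟨fun a ha => h.subset ha, (nodup_pairwise_indexOf w hw).sublist h⟩
  · rintro ⟨hmem, hpw⟩
    exact aux_back w hw u hmem hpw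
end

section
/- Consider a threshold pebble game given by a finite type V, an edge relation E : V → V → Prop whose transitive closure is irreflexive, and a threshold function t : V → ℕ with t v ≥ 1 for every vertex v. Let X : ℕ → Finset V be a legal play, i.e., for every i, every vertex of X (i+1) can be pebbled after X i. If X n is nonempty, then n < Fintype.card V. -/
theorem tpg_dag_play_length_lt_card {V : Type*} [Fintype V]
    (E : V → V → Prop) (hE : Irreflexive (Relation.TransGen E))
    (t : V → ℕ) (ht : ∀ v, 1 ≤ t v)
    (X : ℕ → Finset V)
    (hX : ∀ i, ∀ v ∈ X (i + 1), t v ≤ Set.ncard {p | p ∈ X i ∧ E p v})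
    (n : ℕ) (hn : (X n).Nonempty) :
    n < Fintype.card V := by
  classical
  -- Every vertex in X (i+1) has a predecessor in X i
  have hpred : ∀ i, ∀ v ∈ X (i + 1), ∃ p ∈ X i, E p v := by
    intro i v hv
    have h1 := (ht v).trans (hX i v hv)
    have hne : {p | p ∈ X i ∧ E p v}.Nonempty := by
      apply Set.nonempty_of_ncard_ne_zero
      omega
    obtain ⟨p, hp1, hp2⟩ := hne
    exact ⟨p, hp1, hp2⟩
  -- Build a descending chain of length m starting from any vertex of X m
  have hchain : ∀ m, ∀ v ∈ X m, ∃ c : ℕ → V,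
      c 0 = v ∧ ∀ i < m, E (c (i + 1)) (c i) := by
    intro m
    induction m with
    | zero => intro v _; exact ⟨fun _ => v, rfl, by omega⟩
    | succ k ih =>
      intro v hv
      obtain ⟨p, hp, hpv⟩ := hpred k v hv
      obtain ⟨c, hc0, hc⟩ := ih p hp
      refine ⟨fun i => if i = 0 then v else c (i - 1), if_pos rfl, ?_⟩
      intro i hi
      rcases Nat.eq_zero_or_pos i with h0 | h0
      · subst h0
        simpa [hc0] using hpv
      · have hi1 : i - 1 < k := by omega
        have := hc (i - 1) hi1
        simp only [if_neg (by omega : ¬ i + 1 = 0), if_neg (by omega : ¬ i = 0),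
          Nat.add_sub_cancel]
        have heq : i - 1 + 1 = i := by omega
        rwa [heq] at this
  obtain ⟨v, hv⟩ := hn
  obtain ⟨c, _, hc⟩ := hchain n v hv
  -- transitive closure along the chain
  have htrans : ∀ i j, i < j → j ≤ n → Relation.TransGen E (c j) (c i) := by
    intro i j hij hjn
    induction j with
    | zero => omega
    | succ k ihk =>
      rcases Nat.lt_or_ge i k with h | h
      · exact (ihk h (by omega)).head (hc k (by omega))
      · have : i = k := by omega
        subst this
        exact Relation.TransGen.single (hc i (by omega))
  -- injectivity of c on Fin (n+1)
  have hinj : Function.Injective (fun i : Fin (n + 1) => c i) := by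
    intro a b hab
    by_contra hne
    simp only at hab
    rcases Ne.lt_or_gt (fun h : a = b => hne h) with h | h
    · exact hE (c a) (hab ▸ htrans a b h (by omega))
    · exact hE (c b) (hab ▸ htrans b a h (by omega))
  have := Fintype.card_le_of_injective _ hinj
  simpa using this
end

section
/- Consider a threshold pebble game given by a finite type V with decidable equality, an edge relation E : V → V → Prop (with decidable instances) whose transitive closure is irreflexive, and a threshold function t : V → ℕ with t v ≥ 1 for every vertex v. Define the maximum-step function step : Finset V → Finset V by step X = the set of all vertices v such that v can be pebbled after X. Then for every pebbling X, the (Fintype.card V)-fold iterate of step applied to X is the empty set. -/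
theorem tpg_max_step_iterate_card_eq_empty {V : Type*} [Fintype V] [DecidableEq V]
    (E : V → V → Prop) [DecidableRel E]
    (hE : Irreflexive (Relation.TransGen E))
    (t : V → ℕ) (ht : ∀ v, 1 ≤ t v)
    (X : Finset V) :
    (fun Y : Finset V =>
        Finset.univ.filter (fun v => t v ≤ (Y.filter (fun p => E p v)).card))^[Fintype.card V]
      X = ∅ := by
  set f : Finset V → Finset V := fun Y : Finset V =>
      Finset.univ.filter (fun v => t v ≤ (Y.filter (fun p => E p v)).card) with hf
  have key : ∀ (k : ℕ) (v : V), v ∈ f^[k] X →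
      ∃ l : List V, l.Chain' E ∧ l.length = k + 1 ∧ l.getLast? = some v := by
    intro k
    induction k with
    | zero =>
      intro v _
      exact ⟨[v], List.isChain_singleton v, by simp, by simp⟩
    | succ k ih =>
      intro v hv
      rw [Function.iterate_succ_apply'] at hv
      rw [hf] at hv
      simp only [Finset.mem_filter, Finset.mem_univ, true_and] at hv
      have hpos : 0 < ((f^[k] X).filter (fun p => E p v)).card :=
        lt_of_lt_of_le (ht v) hv
      obtain ⟨p, hp⟩ := Finset.card_pos.mp hpos
      rw [Finset.mem_filter] at hp
      obtain ⟨l, hl1, hl2, hl3⟩ := ih p hp.1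
      refine ⟨l ++ [v], ?_, by simp [hl2], by simp⟩
      rw [List.Chain', List.isChain_append]
      refine ⟨hl1, by simp, ?_⟩
      intro x hx y hy
      rw [hl3] at hx
      simp at hx hy
      subst hx; subst hy
      exact hp.2
  ext v
  simp only [Finset.notMem_empty, iff_false]
  intro hv
  obtain ⟨l, hl1, hl2, _⟩ := key (Fintype.card V) v hv
  have htg : l.Chain' (Relation.TransGen E) := hl1.imp (fun _ _ h => Relation.TransGen.single h)
  have hpw : l.Pairwise (Relation.TransGen E) :=
    (List.isChain_iff_pairwise.mp htg)
  have hnd : l.Nodup := hpw.imp (fun {a b} h => by rintro rfl; exact hE a h)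
  have := hnd.length_le_card
  omega
end

section
/- Let V be a type, G : V → V → Prop a directed graph, and k ≥ 1 a natural number. Define a directed graph G' on the type V ⊕ (V × V × Fin k) with exactly the following edges: for every pair (a,b) : V × V, an edge from Sum.inl a to Sum.inr (a,b,0); for every pair (a,b) and every i : Fin k with i+1 < k, an edge from Sum.inr (a,b,i) to Sum.inr (a,b,i+1); and, whenever G a b holds, an edge from Sum.inr (a,b,k-1) to Sum.inl b. Then for all a, b : V, there is a G'-path from Sum.inl a to Sum.inl b (i.e., Relation.ReflTransGen G' (Sum.inl a) (Sum.inl b)) if and only if there is a G-path from a to b (Relation.ReflTransGen G a b). -/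
/-- The graph obtained from `G` by replacing each potential edge `(a, b)` with a
chain of `k` new vertices `(a, b, 0), …, (a, b, k-1)` attached to `a`, where the
final edge from `(a, b, k-1)` into `b` is present exactly when `G a b` holds. -/
def ChainGraph {V : Type*} (G : V → V → Prop) (k : ℕ) (hk : 1 ≤ k) :
    (V ⊕ V × V × Fin k) → (V ⊕ V × V × Fin k) → Prop :=
  fun x y =>
    (∃ a b : V, x = Sum.inl a ∧ y = Sum.inr (a, b, (⟨0, hk⟩ : Fin k))) ∨
    (∃ a b : V, ∃ i : Fin k, ∃ h : (i : ℕ) + 1 < k,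
        x = Sum.inr (a, b, i) ∧ y = Sum.inr (a, b, ⟨(i : ℕ) + 1, h⟩)) ∨
    (∃ a b : V, G a b ∧ x = Sum.inr (a, b, (⟨k - 1, by omega⟩ : Fin k)) ∧
        y = Sum.inl b)

theorem chainGraph_reachability {V : Type*} (G : V → V → Prop) (k : ℕ)
    (hk : 1 ≤ k) (a b : V) :
    Relation.ReflTransGen (ChainGraph G k hk) (Sum.inl a) (Sum.inl b) ↔
      Relation.ReflTransGen G a b := by
  constructor
  · intro h
    have key : ∀ x, Relation.ReflTransGen (ChainGraph G k hk) (Sum.inl a) x →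
        (∀ c : V, x = Sum.inl c → Relation.ReflTransGen G a c) ∧
        (∀ c d : V, ∀ i : Fin k, x = Sum.inr (c, d, i) →
          Relation.ReflTransGen G a c) := by
      intro x hx
      induction hx with
      | refl =>
        constructor
        · rintro c hc
          cases hc
          exact Relation.ReflTransGen.refl
        · rintro c d i hc
          cases hc
      | tail hxy hedge ih =>
        rcases hedge with ⟨p, q, rfl, rfl⟩ | ⟨p, q, i, hi, rfl, rfl⟩ |
            ⟨p, q, hpq, rfl, rfl⟩
        · constructor
          · rintro c hc; cases hc
          · rintro c d i hc
            injection hc with hc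
            injection hc with h1 h2
            subst h1
            exact ih.1 p rfl
        · constructor
          · rintro c hc; cases hc
          · rintro c d j hc
            injection hc with hc
            injection hc with h1 h2
            subst h1
            exact ih.2 p q i rfl
        · constructor
          · rintro c hc
            injection hc with hc
            subst hc
            exact (ih.2 p q _ rfl).tail hpq
          · rintro c d i hc; cases hc
    exact (key _ h).1 b rfl
  · intro h
    induction h with
    | refl => exact Relation.ReflTransGen.refl
    | @tail c d hac hcd ih =>
      refine ih.trans ?_
      have chain : ∀ j (hj : j < k),
          Relation.ReflTransGen (ChainGraph G k hk) (Sum.inl c)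
            (Sum.inr (c, d, ⟨j, hj⟩)) := by
        intro j
        induction j with
        | zero =>
          intro hj
          exact Relation.ReflTransGen.single (Or.inl ⟨c, d, rfl, rfl⟩)
        | succ n ihn =>
          intro hj
          have hn : n < k := by omega
          exact (ihn hn).tail (Or.inr (Or.inl ⟨c, d, ⟨n, hn⟩, hj, rfl, rfl⟩))
      exact (chain (k - 1) (by omega)).tail
        (Or.inr (Or.inr ⟨c, d, hcd, rfl, rfl⟩))
end

section
/- Let Q be a type, k ≥ 1 a natural number, and δ : Option Q → Q → Option Q → Q a local transition rule (where none represents a missing neighbor at the boundary). For a configuration c : Fin k → Q define the parallel step P c : Fin k → Q by P c i = δ (left c i) (c i) (right c i), where left c i = some (c (i-1)) if i > 0 and none if i = 0, and right c i = some (c (i+1)) if i < k-1 and none if i = k-1. Fix any x : Fin k → Q and define the sequential pass g : ℕ → (Fin k → Q × Q) by: g 0 is the configuration i ↦ (x i, c i); and g (m+1) is obtained from g m by (if m < k) replacing the pair at cell m by (snd (g m m), δ L (snd (g m m)) R), where L is some of the FIRST component of the pair of cell m-1 under g m (or none if m = 0) and R is some of the SECOND component of the pair of cell m+1 under g m (or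 none if m = k-1); for m ≥ k, g (m+1) = g m. Then for every i : Fin k, g k i = (c i, P c i). -/
/-- The state of the left neighbor of cell `i` (or `none` if `i = 0`). -/
def caLeft {Q : Type*} {k : ℕ} (c : Fin k → Q) (i : Fin k) : Option Q :=
  if h : 0 < (i : ℕ) then some (c ⟨(i : ℕ) - 1, by omega⟩) else none

/-- The state of the right neighbor of cell `i` (or `none` if `i = k - 1`). -/
def caRight {Q : Type*} {k : ℕ} (c : Fin k → Q) (i : Fin k) : Option Q :=
  if h : (i : ℕ) + 1 < k then some (c ⟨(i : ℕ) + 1, h⟩) else none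

/-- One parallel step of the cellular automaton with local rule `δ`. -/
def parStep {Q : Type*} {k : ℕ} (δ : Option Q → Q → Option Q → Q)
    (c : Fin k → Q) : Fin k → Q :=
  fun i => δ (caLeft c i) (c i) (caRight c i)

/-- One minor step of the sequential pass: at time `m < k` cell `m` updates its
pair `(previous, current)` to `(current, δ L current R)`, where `L` is the
*first* (previous-state) component of the pair of cell `m - 1` (or `none` if
`m = 0`) and `R` is the *second* (current-state) component of the pair of cell
`m + 1` (or `none` if `m = k - 1`); for `m ≥ k` nothing happens. -/
def seqStep {Q : Type*} {k : ℕ} (δ : Option Q → Q → Option Q → Q) (m : ℕ)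
    (f : Fin k → Q × Q) : Fin k → Q × Q :=
  if hm : m < k then
    Function.update f ⟨m, hm⟩
      ((f ⟨m, hm⟩).2,
        δ (if h0 : 0 < m then some ((f ⟨m - 1, by omega⟩).1) else none)
          ((f ⟨m, hm⟩).2)
          (if h1 : m + 1 < k then some ((f ⟨m + 1, h1⟩).2) else none))
  else f

/-- The sequential pass: iterate the minor steps starting from `f0`. -/
def seqPass {Q : Type*} {k : ℕ} (δ : Option Q → Q → Option Q → Q)
    (f0 : Fin k → Q × Q) : ℕ → Fin k → Q × Q
  | 0 => f0
  | m + 1 => seqStep δ m (seqPass δ f0 m)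

theorem seqPass_eq_parStep {Q : Type*} (k : ℕ) (hk : 1 ≤ k)
    (δ : Option Q → Q → Option Q → Q) (c : Fin k → Q) (x : Fin k → Q)
    (i : Fin k) :
    seqPass δ (fun i => (x i, c i)) k i = (c i, parStep δ c i) := by
  have key : ∀ m, m ≤ k → ∀ j : Fin k,
      seqPass δ (fun i => (x i, c i)) m j =
        if (j : ℕ) < m then (c j, parStep δ c j) else (x j, c j) := by
    intro m
    induction m with
    | zero => intro _ j; simp [seqPass]
    | succ m ih =>
      intro hm j
      have hm' : m < k := by omega
      have ihm := ih (by omega)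
      simp only [seqPass, seqStep, dif_pos hm']
      by_cases hj : j = ⟨m, hm'⟩
      · subst hj
        rw [Function.update_self]
        have h1 : seqPass δ (fun i => (x i, c i)) m ⟨m, hm'⟩ = (x ⟨m, hm'⟩, c ⟨m, hm'⟩) := by
          rw [ihm ⟨m, hm'⟩]; simp
        rw [h1]
        simp only [Fin.val_mk, lt_add_iff_pos_right, Nat.lt_irrefl, if_pos Nat.zero_lt_one]
        have hL : (if h0 : 0 < m then
            some ((seqPass δ (fun i => (x i, c i)) m ⟨m - 1, by omega⟩).1) else none) =
            caLeft c ⟨m, hm'⟩ := by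
          unfold caLeft
          by_cases h0 : 0 < m
          · rw [dif_pos h0, dif_pos (by simpa using h0)]
            rw [ihm ⟨m - 1, by omega⟩]
            simp only [Fin.val_mk]
            rw [if_pos (by omega)]
          · rw [dif_neg h0, dif_neg (by simpa using h0)]
        have hR : (if h1 : m + 1 < k then
            some ((seqPass δ (fun i => (x i, c i)) m ⟨m + 1, h1⟩).2) else none) =
            caRight c ⟨m, hm'⟩ := by
          unfold caRight
          by_cases h1 : m + 1 < k
          · rw [dif_pos h1, dif_pos (by simpa using h1)]
            rw [ihm ⟨m + 1, h1⟩]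
            simp only [Fin.val_mk]
            rw [if_neg (by omega)]
          · rw [dif_neg h1, dif_neg (by simpa using h1)]
        rw [hL, hR]
        rfl
      · rw [Function.update_of_ne hj, ihm j]
        have hne : (j : ℕ) ≠ m := fun h => hj (Fin.ext h)
        by_cases hlt : (j : ℕ) < m
        · rw [if_pos hlt, if_pos (by omega)]
        · rw [if_neg hlt, if_neg (by omega)]
  rw [key k le_rfl i, if_pos i.isLt]
end
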